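/- Let X be a measurable space, x_0 ∈ X, and ρ : X × X → ℝ a measurable symmetric function. Let X, X', Y, Y' be independent X-valued random variables with X' distributed as X and Y' distributed as Y, and assume ρ(X,Y), ρ(X,X'), ρ(Y,Y'), ρ(X,x_0) and ρ(Y,x_0) are all integrable. Define k(x,y) = (1/2)( ρ(x,x_0) + ρ(y,x_0) − ρ(x,y) ). Then 2 E[ρ(X,Y)] − E[ρ(X,X')] − E[ρ(Y,Y')] = 2 ( E[k(X,X')] + E[k(Y,Y')] − 2 E[k(X,Y)] ). -/

import Mathlib

open MeasureTheory ProbabilityTheory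

/-- The energy distance of Matteson–James expressed through the induced kernel
`k(x,y) = (1/2)(ρ(x,x₀) + ρ(y,x₀) − ρ(x,y))`: for independent `X, X', Y, Y'` with
`X' ~ X` and `Y' ~ Y` and the required integrability,
`2 E[ρ(X,Y)] − E[ρ(X,X')] − E[ρ(Y,Y')] = 2 ( E[k(X,X')] + E[k(Y,Y')] − 2 E[k(X,Y)] )`. -/
theorem energy_distance_eq_kernel {𝒳 : Type*} [MeasurableSpace 𝒳]
    {Ω : Type*} [MeasurableSpace Ω] (μ : Measure Ω) [IsProbabilityMeasure μ]
    (x₀ : 𝒳) (ρ : 𝒳 → 𝒳 → ℝ)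
    (hρmeas : Measurable fun p : 𝒳 × 𝒳 => ρ p.1 p.2)
    (hρsym : ∀ x y, ρ x y = ρ y x)
    (X X' Y Y' : Ω → 𝒳)
    (hX : Measurable X) (hX' : Measurable X') (hY : Measurable Y) (hY' : Measurable Y')
    (hindep : iIndepFun (β := fun _ : Fin 4 => 𝒳)
      ![X, X', Y, Y'] μ)
    (hXX' : IdentDistrib X' X μ μ) (hYY' : IdentDistrib Y' Y μ μ)
    (hiXY : Integrable (fun ω => ρ (X ω) (Y ω)) μ)
    (hiXX' : Integrable (fun ω => ρ (X ω) (X' ω)) μ)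
    (hiYY' : Integrable (fun ω => ρ (Y ω) (Y' ω)) μ)
    (hiX0 : Integrable (fun ω => ρ (X ω) x₀) μ)
    (hiY0 : Integrable (fun ω => ρ (Y ω) x₀) μ)
    (k : 𝒳 → 𝒳 → ℝ) (hk : ∀ x y, k x y = (1 / 2) * (ρ x x₀ + ρ y x₀ - ρ x y)) :
    2 * ∫ ω, ρ (X ω) (Y ω) ∂μ - ∫ ω, ρ (X ω) (X' ω) ∂μ - ∫ ω, ρ (Y ω) (Y' ω) ∂μ =
      2 * ((∫ ω, k (X ω) (X' ω) ∂μ) + (∫ ω, k (Y ω) (Y' ω) ∂μ) -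
        2 * ∫ ω, k (X ω) (Y ω) ∂μ) := by
  have hg : Measurable fun y : 𝒳 => ρ y x₀ :=
    hρmeas.comp (measurable_id.prodMk measurable_const)
  have h1 : IdentDistrib (fun ω => ρ (X' ω) x₀) (fun ω => ρ (X ω) x₀) μ μ :=
    hXX'.comp hg
  have h2 : IdentDistrib (fun ω => ρ (Y' ω) x₀) (fun ω => ρ (Y ω) x₀) μ μ :=
    hYY'.comp hg
  have hiX0' : Integrable (fun ω => ρ (X' ω) x₀) μ := h1.integrable_iff.mpr hiX0
  have hiY0' : Integrable (fun ω => ρ (Y' ω) x₀) μ := h2.integrable_iff.mpr hiY0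
  have key : ∀ (U V : Ω → 𝒳), Integrable (fun ω => ρ (U ω) x₀) μ →
      Integrable (fun ω => ρ (V ω) x₀) μ → Integrable (fun ω => ρ (U ω) (V ω)) μ →
      ∫ ω, k (U ω) (V ω) ∂μ =
        (1 / 2) * ((∫ ω, ρ (U ω) x₀ ∂μ) + (∫ ω, ρ (V ω) x₀ ∂μ) - ∫ ω, ρ (U ω) (V ω) ∂μ) := by
    intro U V hU hV hUV
    simp only [hk]
    have hsum : Integrable (fun ω => ρ (U ω) x₀ + ρ (V ω) x₀) μ := hU.add hV
    rw [integral_const_mul, integral_sub hsum hUV, integral_add hU hV]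
  rw [key X X' hiX0 hiX0' hiXX', key Y Y' hiY0 hiY0' hiYY', key X Y hiX0 hiY0 hiXY,
    h1.integral_eq, h2.integral_eq]
  ring
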